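/- Let T be a closed subset of [0,1] containing 0 and 1. If h̃ ∈ H¹ (the classical Cameron–Martin space of absolutely continuous functions on [0,1] vanishing at 0 with square-integrable derivative), then its restriction J(h̃) to T belongs to H_T, i.e., there exists h^Δ ∈ L²(λ_Δ) such that h̃(t) = ∫_{[0,t)∩T} h^Δ(s) dλ_Δ(s) for all t ∈ T. Explicitly one may take h^Δ(t) = h̃'(t) for t ∈ T not right-scattered and h^Δ(t) = (h̃(σ̄(t)) − h̃(t))/(σ̄(t) − t) for t right-scattered. -/

import Mathlib

open MeasureTheory Set
open scoped ENNReal Classical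

noncomputable def rhoBar (T : Set ℝ) (t : ℝ) : ℝ :=
  if t = 0 then 0 else sSup {u | u ∈ T ∧ u < t}

noncomputable def sigmaBar (T : Set ℝ) (t : ℝ) : ℝ :=
  if t = 1 then 1 else sInf {u | u ∈ T ∧ t < u}

noncomputable def lamDelta (T : Set ℝ) : Measure ℝ :=
  Measure.map (rhoBar T) (volume.restrict (Icc 0 1))

noncomputable def htilde (g : ℝ → ℝ) (t : ℝ) : ℝ := ∫ s in Ico (0:ℝ) t, g s

noncomputable def jDensity (T : Set ℝ) (g : ℝ → ℝ) (t : ℝ) : ℝ :=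
  if sigmaBar T t = t then g t
  else (htilde g (sigmaBar T t) - htilde g t) / (sigmaBar T t - t)

noncomputable def gDot (T : Set ℝ) (hΔ : ℝ → ℝ) (s : ℝ) : ℝ :=
  if s ∈ T then hΔ s else hΔ (rhoBar T s)

section Aux

variable {T : Set ℝ} (hT : IsClosed T) (hTsub : T ⊆ Icc 0 1)
  (h0T : (0:ℝ) ∈ T) (h1T : (1:ℝ) ∈ T)

lemma bddAbove_rho (s : ℝ) : BddAbove {u | u ∈ T ∧ u < s} :=
  ⟨s, fun u hu => hu.2.le⟩

lemma bddBelow_sig (hTsub : T ⊆ Icc 0 1) (t : ℝ) : BddBelow {u | u ∈ T ∧ t < u} :=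
  ⟨0, fun u hu => (hTsub hu.1).1⟩

lemma rhoBar_nonpos (hTsub : T ⊆ Icc 0 1) {s : ℝ} (hs : s ≤ 0) : rhoBar T s = 0 := by
  rcases eq_or_lt_of_le hs with h | h
  · simp [rhoBar, h.symm]
  · have he : {u | u ∈ T ∧ u < s} = ∅ := by
      ext u; simp only [mem_setOf_eq, mem_empty_iff_false, iff_false, not_and]
      exact fun hu hlt => absurd (lt_of_lt_of_le hlt hs) (not_lt.2 (hTsub hu).1)
    rw [rhoBar, if_neg (ne_of_lt h), he, Real.sSup_empty]

lemma rhoBar_of_pos (h0T : (0:ℝ) ∈ T) {s : ℝ} (hs : 0 < s) :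
    rhoBar T s = sSup {u | u ∈ T ∧ u < s} := by
  rw [rhoBar, if_neg (ne_of_gt hs)]

lemma rhoBar_nonneg (hTsub : T ⊆ Icc 0 1) (h0T : (0:ℝ) ∈ T) (s : ℝ) : 0 ≤ rhoBar T s := by
  rcases le_or_gt s 0 with h | h
  · rw [rhoBar_nonpos hTsub h]
  · rw [rhoBar_of_pos h0T h]
    exact le_csSup (bddAbove_rho s) ⟨h0T, h⟩

lemma rhoBar_le_one (hTsub : T ⊆ Icc 0 1) (h0T : (0:ℝ) ∈ T) (s : ℝ) : rhoBar T s ≤ 1 := by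
  rcases le_or_gt s 0 with h | h
  · rw [rhoBar_nonpos hTsub h]; norm_num
  · rw [rhoBar_of_pos h0T h]
    exact csSup_le ⟨0, h0T, h⟩ fun u hu => (hTsub hu.1).2

lemma rhoBar_le_self (h0T : (0:ℝ) ∈ T) {s : ℝ} (hs : 0 ≤ s) : rhoBar T s ≤ s := by
  rcases eq_or_lt_of_le hs with h | h
  · simp [rhoBar, h.symm]
  · rw [rhoBar_of_pos h0T h]
    exact csSup_le ⟨0, h0T, h⟩ fun u hu => hu.2.le

lemma rhoBar_mem (hT : IsClosed T) (h0T : (0:ℝ) ∈ T) {s : ℝ} (hs : 0 ≤ s) :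
    rhoBar T s ∈ T := by
  rcases eq_or_lt_of_le hs with h | h
  · simpa [rhoBar, h.symm] using h0T
  · rw [rhoBar_of_pos h0T h]
    have h1 : sSup {u | u ∈ T ∧ u < s} ∈ closure {u | u ∈ T ∧ u < s} :=
      csSup_mem_closure ⟨0, h0T, h⟩ (bddAbove_rho s)
    have h2 : closure {u | u ∈ T ∧ u < s} ⊆ T :=
      hT.closure_subset_iff.2 fun u hu => hu.1
    exact h2 h1

lemma rhoBar_mono (hTsub : T ⊆ Icc 0 1) (h0T : (0:ℝ) ∈ T) : Monotone (rhoBar T) := by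
  intro s s' h
  rcases le_or_gt s 0 with hs | hs
  · rw [rhoBar_nonpos hTsub hs]; exact rhoBar_nonneg hTsub h0T s'
  · rw [rhoBar_of_pos h0T hs, rhoBar_of_pos h0T (lt_of_lt_of_le hs h)]
    exact csSup_le_csSup (bddAbove_rho s') ⟨0, h0T, hs⟩ fun u hu => ⟨hu.1, lt_of_lt_of_le hu.2 h⟩

lemma le_sigmaBar (h1T : (1:ℝ) ∈ T) {t : ℝ} (ht : t ≤ 1) : t ≤ sigmaBar T t := by
  rcases eq_or_lt_of_le ht with h | h
  · simp [sigmaBar, h]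
  · rw [sigmaBar, if_neg (ne_of_lt h)]
    exact le_csInf ⟨1, h1T, h⟩ fun u hu => hu.2.le

lemma sigmaBar_le_one (hTsub : T ⊆ Icc 0 1) (h1T : (1:ℝ) ∈ T) {t : ℝ} (ht : t ≤ 1) :
    sigmaBar T t ≤ 1 := by
  rcases eq_or_lt_of_le ht with h | h
  · simp [sigmaBar, h]
  · rw [sigmaBar, if_neg (ne_of_lt h)]
    exact csInf_le (bddBelow_sig hTsub t) ⟨h1T, h⟩

lemma sigmaBar_mem (hT : IsClosed T) (hTsub : T ⊆ Icc 0 1) (h1T : (1:ℝ) ∈ T)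
    {t : ℝ} (ht : t ≤ 1) : sigmaBar T t ∈ T := by
  rcases eq_or_lt_of_le ht with h | h
  · simpa [sigmaBar, h] using h1T
  · rw [sigmaBar, if_neg (ne_of_lt h)]
    have h1 : sInf {u | u ∈ T ∧ t < u} ∈ closure {u | u ∈ T ∧ t < u} :=
      csInf_mem_closure ⟨1, h1T, h⟩ (bddBelow_sig hTsub t)
    have h2 : closure {u | u ∈ T ∧ t < u} ⊆ T :=
      hT.closure_subset_iff.2 fun u hu => hu.1
    exact h2 h1

lemma sigmaBar_le (hTsub : T ⊆ Icc 0 1) {t u : ℝ} (huT : u ∈ T) (htu : t < u) :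
    sigmaBar T t ≤ u := by
  by_cases h : t = 1
  · exact absurd (hTsub huT).2 (not_le.2 (h ▸ htu))
  · rw [sigmaBar, if_neg h]
    exact csInf_le (bddBelow_sig hTsub t) ⟨huT, htu⟩

lemma notMem_of_mem_Ioo_sigmaBar (hTsub : T ⊆ Icc 0 1) {t u : ℝ}
    (hu : u ∈ Ioo t (sigmaBar T t)) : u ∉ T :=
  fun huT => absurd (sigmaBar_le hTsub huT hu.1) (not_le.2 hu.2)

lemma le_sigmaBar_rhoBar (h0T : (0:ℝ) ∈ T) (h1T : (1:ℝ) ∈ T) (hTsub : T ⊆ Icc 0 1)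
    {s : ℝ} (hs : s ∈ Icc (0:ℝ) 1) (h : rhoBar T s < s) : s ≤ sigmaBar T (rhoBar T s) := by
  have hρ1 : rhoBar T s ≠ 1 := ne_of_lt (lt_of_lt_of_le h hs.2)
  rw [sigmaBar, if_neg hρ1]
  refine le_csInf ⟨1, h1T, lt_of_lt_of_le h hs.2⟩ fun u hu => ?_
  by_contra hus
  push_neg at hus
  have hs0 : 0 < s := lt_of_le_of_lt (rhoBar_nonneg hTsub h0T s) h
  have : u ≤ rhoBar T s := by
    rw [rhoBar_of_pos h0T hs0]
    exact le_csSup (bddAbove_rho s) ⟨hu.1, hus⟩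
  exact absurd hu.2 (not_lt.2 this)

lemma gap_rhoBar (hT : IsClosed T) (hTsub : T ⊆ Icc 0 1) (h0T : (0:ℝ) ∈ T)
    {a s : ℝ} (haT : a ∈ T) (hs : s ∈ Ioo a (sigmaBar T a)) : rhoBar T s = a := by
  have ha0 : 0 ≤ a := (hTsub haT).1
  have hs0 : 0 < s := lt_of_le_of_lt ha0 hs.1
  rw [rhoBar_of_pos h0T hs0]
  have hub : ∀ u ∈ {u | u ∈ T ∧ u < s}, u ≤ a := by
    rintro u ⟨huT, hus⟩
    by_contra hau
    push_neg at hau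
    exact notMem_of_mem_Ioo_sigmaBar hTsub ⟨hau, lt_trans hus hs.2⟩ huT
  exact le_antisymm (csSup_le ⟨a, haT, hs.1⟩ hub) (le_csSup ⟨a, hub⟩ ⟨haT, hs.1⟩)

lemma rhoBar_eq_self_of_sigmaBar (hT : IsClosed T) (hTsub : T ⊆ Icc 0 1)
    (h0T : (0:ℝ) ∈ T) (h1T : (1:ℝ) ∈ T) {s : ℝ} (hs : s ∈ Icc (0:ℝ) 1)
    (hσ : sigmaBar T (rhoBar T s) = rhoBar T s) : rhoBar T s = s := by
  by_contra h
  have hlt : rhoBar T s < s := lt_of_le_of_ne (rhoBar_le_self h0T hs.1) h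
  have := le_sigmaBar_rhoBar h0T h1T hTsub hs hlt
  rw [hσ] at this
  exact absurd hlt (not_lt.2 this)

end Aux
section Aux2

variable {T : Set ℝ}

lemma sigmaBar_rhoBar_of_scattered (hT : IsClosed T) (hTsub : T ⊆ Icc 0 1)
    (h0T : (0:ℝ) ∈ T) (h1T : (1:ℝ) ∈ T) {s : ℝ} (hsT : s ∈ T) (h : rhoBar T s < s) :
    sigmaBar T (rhoBar T s) = s :=
  le_antisymm (sigmaBar_le hTsub hsT h)
    (le_sigmaBar_rhoBar h0T h1T hTsub (hTsub hsT) h)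

lemma countable_Rset (hT : IsClosed T) (hTsub : T ⊆ Icc 0 1) (h0T : (0:ℝ) ∈ T)
    (h1T : (1:ℝ) ∈ T) : Set.Countable {a | a ∈ T ∧ a < sigmaBar T a} := by
  refine Set.Countable.mono ?_ (Set.countable_range fun q : ℚ => rhoBar T (q:ℝ))
  rintro a ⟨haT, ha⟩
  obtain ⟨q, hq⟩ := exists_rat_btwn ha
  exact ⟨q, (gap_rhoBar hT hTsub h0T haT ⟨hq.1, hq.2⟩).symm ▸ rfl⟩

lemma countable_Lset (hT : IsClosed T) (hTsub : T ⊆ Icc 0 1) (h0T : (0:ℝ) ∈ T)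
    (h1T : (1:ℝ) ∈ T) : Set.Countable {s | s ∈ T ∧ rhoBar T s < s} := by
  refine Set.Countable.mono ?_ (Set.countable_range fun q : ℚ => sigmaBar T (rhoBar T (q:ℝ)))
  rintro s ⟨hsT, hs⟩
  have hσ : sigmaBar T (rhoBar T s) = s := sigmaBar_rhoBar_of_scattered hT hTsub h0T h1T hsT hs
  obtain ⟨q, hq⟩ := exists_rat_btwn hs
  have hρ : rhoBar T (q:ℝ) = rhoBar T s :=
    gap_rhoBar hT hTsub h0T (rhoBar_mem hT h0T (hTsub hsT).1) ⟨hq.1, hσ.symm ▸ hq.2⟩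
  exact ⟨q, by show sigmaBar T (rhoBar T (q:ℝ)) = s; rw [hρ, hσ]⟩

/-- The gaps of `T` below `t`. -/
def gapSet (T : Set ℝ) (t : ℝ) : Set ℝ :=
  {a | a ∈ T ∧ a < sigmaBar T a ∧ sigmaBar T a ≤ t}

lemma countable_gapSet (hT : IsClosed T) (hTsub : T ⊆ Icc 0 1) (h0T : (0:ℝ) ∈ T)
    (h1T : (1:ℝ) ∈ T) (t : ℝ) : Set.Countable (gapSet T t) := by
  refine Set.Countable.mono ?_ (countable_Rset hT hTsub h0T h1T)
  intro a ha
  exact ⟨ha.1, ha.2.1⟩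

lemma gap_decomp (hT : IsClosed T) (hTsub : T ⊆ Icc 0 1) (h0T : (0:ℝ) ∈ T)
    (h1T : (1:ℝ) ∈ T) {t : ℝ} (htT : t ∈ T) :
    Ico 0 t \ T = ⋃ a ∈ gapSet T t, Ioo a (sigmaBar T a) := by
  ext s
  simp only [mem_diff, mem_Ico, mem_iUnion, exists_prop]
  constructor
  · rintro ⟨⟨hs0, hst⟩, hsT⟩
    have hst1 : s ≤ 1 := le_trans hst.le (hTsub htT).2
    have hρlt : rhoBar T s < s :=
      lt_of_le_of_ne (rhoBar_le_self h0T hs0) fun h => hsT (h ▸ rhoBar_mem hT h0T hs0)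
    have hρT : rhoBar T s ∈ T := rhoBar_mem hT h0T hs0
    have hsle : s ≤ sigmaBar T (rhoBar T s) :=
      le_sigmaBar_rhoBar h0T h1T hTsub ⟨hs0, hst1⟩ hρlt
    have hslt : s < sigmaBar T (rhoBar T s) :=
      lt_of_le_of_ne hsle fun h => hsT (h ▸ sigmaBar_mem hT hTsub h1T
        (le_trans (rhoBar_le_self h0T hs0) hst1))
    refine ⟨rhoBar T s, ⟨hρT, lt_trans hρlt hslt, ?_⟩, hρlt, hslt⟩
    exact sigmaBar_le hTsub htT (lt_of_lt_of_le hρlt hst.le)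
  · rintro ⟨a, ⟨haT, halt, hat⟩, has, hass⟩
    refine ⟨⟨le_trans (hTsub haT).1 has.le, lt_of_lt_of_le hass hat⟩, ?_⟩
    exact notMem_of_mem_Ioo_sigmaBar hTsub ⟨has, hass⟩

lemma gaps_disjoint (hTsub : T ⊆ Icc 0 1) {a b : ℝ} (haT : a ∈ T) (hbT : b ∈ T)
    (hab : a ≠ b) : Disjoint (Ioo a (sigmaBar T a)) (Ioo b (sigmaBar T b)) := by
  wlog h : a < b generalizing a b
  · exact (this hbT haT hab.symm (hab.lt_or_gt.resolve_left h)).symm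
  · rw [Set.disjoint_left]
    rintro s ⟨_, hs2⟩ ⟨hs3, _⟩
    exact absurd (lt_trans (lt_of_lt_of_le hs2 (sigmaBar_le hTsub hbT h)) hs3) (lt_irrefl s)

lemma measurable_rhoBar (hTsub : T ⊆ Icc 0 1) (h0T : (0:ℝ) ∈ T) :
    Measurable (rhoBar T) :=
  (rhoBar_mono hTsub h0T).measurable

lemma measurable_sigmaBar (hTsub : T ⊆ Icc 0 1) (h1T : (1:ℝ) ∈ T) :
    Measurable (sigmaBar T) := by
  set n : ℝ → ℝ := fun t => if t < 1 then sInf {u | u ∈ T ∧ t < u} else 1 with hn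
  have hmono : Monotone n := by
    intro t t' htt'
    by_cases ht' : t' < 1
    · have ht : t < 1 := lt_of_le_of_lt htt' ht'
      simp only [hn, if_pos ht, if_pos ht']
      exact csInf_le_csInf (bddBelow_sig hTsub t) ⟨1, h1T, ht'⟩
        fun u hu => ⟨hu.1, lt_of_le_of_lt htt' hu.2⟩
    · by_cases ht : t < 1
      · simp only [hn, if_pos ht, if_neg ht']
        exact csInf_le (bddBelow_sig hTsub t) ⟨h1T, ht⟩
      · simp [hn, if_neg ht, if_neg ht', le_refl]
  have heq : sigmaBar T = (Iic (1:ℝ)).piecewise n fun _ => 0 := by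
    funext t
    by_cases ht : t ≤ 1
    · rw [Set.piecewise_eq_of_mem (hi := Set.mem_Iic.2 ht)]
      rcases eq_or_lt_of_le ht with h | h
      · simp [sigmaBar, h, hn]
      · rw [sigmaBar, if_neg (ne_of_lt h), hn]; simp [h]
    · rw [Set.piecewise_eq_of_notMem (hi := fun hc => ht (Set.mem_Iic.1 hc))]
      push_neg at ht
      have he : {u | u ∈ T ∧ t < u} = ∅ := by
        ext u
        simp only [mem_setOf_eq, mem_empty_iff_false, iff_false, not_and]
        exact fun hu hlt => absurd (lt_trans ht hlt) (not_lt.2 (hTsub hu).2)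
      rw [sigmaBar, if_neg (by linarith : t ≠ 1), he, Real.sInf_empty]
  rw [heq]
  exact Measurable.piecewise measurableSet_Iic hmono.measurable measurable_const

end Aux2
section Aux3

lemma htilde_eq (g : ℝ → ℝ) (t : ℝ) :
    htilde g t = ∫ x in (0:ℝ)..(max t 0), g x := by
  rcases le_or_gt t 0 with h | h
  · rw [max_eq_right h, intervalIntegral.integral_same, htilde,
      Set.Ico_eq_empty (not_lt.2 h)]
    simp
  · rw [max_eq_left h.le, intervalIntegral.integral_of_le h.le, htilde,
      MeasureTheory.integral_Ico_eq_integral_Ioo, MeasureTheory.integral_Ioc_eq_integral_Ioo]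

lemma continuous_htilde {g : ℝ → ℝ} (hg : Integrable g volume) :
    Continuous (htilde g) := by
  have h1 : Continuous fun b => ∫ x in (0:ℝ)..b, g x :=
    intervalIntegral.continuous_primitive (fun a b => hg.intervalIntegrable) 0
  have : Continuous fun t : ℝ => ∫ x in (0:ℝ)..(max t 0), g x :=
    h1.comp (continuous_id.max continuous_const)
  exact (funext (htilde_eq g) : htilde g = _) ▸ this

lemma htilde_diff {g : ℝ → ℝ} (hg : Integrable g volume) {a b : ℝ}
    (ha : 0 ≤ a) (hab : a ≤ b) :
    htilde g b - htilde g a = ∫ s in Ico a b, g s := by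
  have := MeasureTheory.setIntegral_union (μ := volume) (f := g)
    (Set.Ico_disjoint_Ico_same (a := 0) (b := a) (c := b)) measurableSet_Ico
    hg.integrableOn hg.integrableOn
  rw [Set.Ico_union_Ico_eq_Ico ha hab] at this
  rw [htilde, htilde, this]
  ring

end Aux3
section Aux4

variable {T : Set ℝ}

lemma measurable_jDensity (hTsub : T ⊆ Icc 0 1) (h1T : (1:ℝ) ∈ T)
    {g : ℝ → ℝ} (hgm : Measurable g) (hgi : Integrable g volume) :
    Measurable (jDensity T g) := by
  have hσ : Measurable (sigmaBar T) := measurable_sigmaBar hTsub h1T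
  have hH : Measurable (htilde g) := (continuous_htilde hgi).measurable
  have hs : MeasurableSet {t : ℝ | sigmaBar T t = t} :=
    measurableSet_eq_fun hσ measurable_id
  exact Measurable.ite hs hgm (((hH.comp hσ).sub hH).div (hσ.sub measurable_id))

lemma ennnorm_sq (x : ℝ) : (‖x‖₊ : ℝ≥0∞) ^ 2 = ENNReal.ofReal (x ^ 2) := by
  rw [← enorm_eq_nnnorm, Real.enorm_eq_ofReal_abs, ← ENNReal.ofReal_pow (abs_nonneg x), sq_abs]

/-- Cauchy–Schwarz for set integrals. -/
lemma sq_setIntegral_le {f : ℝ → ℝ} {s : Set ℝ} (hs : MeasurableSet s)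
    (hμ : volume s ≠ ∞) (hf : IntegrableOn f s volume)
    (hf2 : IntegrableOn (fun x => f x ^ 2) s volume) :
    (∫ x in s, f x) ^ 2 ≤ (volume s).toReal * ∫ x in s, f x ^ 2 := by
  set m := (volume s).toReal with hm
  rcases eq_or_lt_of_le (ENNReal.toReal_nonneg : 0 ≤ m) with h0 | h0
  · have hs0 : volume s = 0 := by
      rcases (ENNReal.toReal_eq_zero_iff _).1 h0.symm with h | h
      exacts [h, absurd h hμ]
    rw [Measure.restrict_eq_zero.2 hs0]
    simp
  · haveI : IsFiniteMeasure (volume.restrict s) :=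
      ⟨by rw [Measure.restrict_apply_univ]; exact lt_top_iff_ne_top.2 hμ⟩
    set B := ∫ x in s, f x with hB
    set A := ∫ x in s, f x ^ 2 with hA
    set d := B / m with hd
    have key : 0 ≤ ∫ x in s, (f x - d) ^ 2 := integral_nonneg fun x => sq_nonneg _
    have expand : ∫ x in s, (f x - d) ^ 2 = A - 2 * d * B + d ^ 2 * m := by
      have h1 : ∀ x, (f x - d) ^ 2 = f x ^ 2 - (2 * d) * f x + d ^ 2 := fun x => by ring
      simp_rw [h1]
      rw [integral_add (by exact (hf2.sub (hf.const_mul (2*d))) ) (integrable_const _),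
        integral_sub hf2 (hf.const_mul (2*d)), MeasureTheory.integral_const_mul, integral_const]
      simp only [smul_eq_mul, measureReal_def, Measure.restrict_apply_univ, ← hm, ← hA, ← hB]
      ring
    rw [expand, hd] at key
    have hm0 : m ≠ 0 := ne_of_gt h0
    have h2 : A - 2 * (B / m) * B + (B / m) ^ 2 * m = A - B ^ 2 / m := by
      field_simp
      ring
    rw [h2] at key
    have h3 : B ^ 2 / m ≤ A := by linarith
    calc B ^ 2 = B ^ 2 / m * m := (div_mul_cancel₀ _ hm0).symm
    _ ≤ A * m := mul_le_mul_of_nonneg_right h3 h0.le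
    _ = m * A := mul_comm _ _

end Aux4
section Aux5

variable {T : Set ℝ}

lemma ae_jDensity_rhoBar_eq (hT : IsClosed T) (hTsub : T ⊆ Icc 0 1)
    (h0T : (0:ℝ) ∈ T) (h1T : (1:ℝ) ∈ T) (g : ℝ → ℝ) {s : Set ℝ} (hsub : s ⊆ T) :
    ∀ᵐ x ∂(volume : Measure ℝ), x ∈ s → jDensity T g (rhoBar T x) = g x := by
  rw [ae_iff]
  refine measure_mono_null (t := {a | a ∈ T ∧ a < sigmaBar T a} ∪ {a | a ∈ T ∧ rhoBar T a < a}) ?_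
    (Set.Countable.measure_zero
      ((countable_Rset hT hTsub h0T h1T).union (countable_Lset hT hTsub h0T h1T)) _)
  intro x hx
  simp only [mem_setOf_eq, not_forall] at hx
  obtain ⟨hxs, hxne⟩ := hx
  have hxT : x ∈ T := hsub hxs
  by_contra hcon
  simp only [Set.mem_union, mem_setOf_eq, not_or, not_and, not_lt] at hcon
  have hσ : sigmaBar T x = x := le_antisymm (hcon.1 hxT) (le_sigmaBar h1T (hTsub hxT).2)
  have hρ : rhoBar T x = x := le_antisymm (rhoBar_le_self h0T (hTsub hxT).1) (hcon.2 hxT)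
  apply hxne
  rw [hρ, jDensity, if_pos hσ]

lemma core_integral_eq (hT : IsClosed T) (hTsub : T ⊆ Icc 0 1)
    (h0T : (0:ℝ) ∈ T) (h1T : (1:ℝ) ∈ T) {g : ℝ → ℝ} (hgi : Integrable g volume)
    (hFi : IntegrableOn (fun s => jDensity T g (rhoBar T s)) (Icc 0 1) volume)
    {t : ℝ} (htT : t ∈ T) :
    ∫ s in Ico (0:ℝ) t, jDensity T g (rhoBar T s) = ∫ s in Ico (0:ℝ) t, g s := by
  set F : ℝ → ℝ := fun s => jDensity T g (rhoBar T s) with hF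
  have htI : t ∈ Icc (0:ℝ) 1 := hTsub htT
  have hIsub : Ico (0:ℝ) t ⊆ Icc 0 1 := fun x hx => ⟨hx.1, le_trans hx.2.le htI.2⟩
  have hFi' : IntegrableOn F (Ico 0 t) volume := hFi.mono_set hIsub
  have hgi' : IntegrableOn g (Ico 0 t) volume := hgi.integrableOn
  have hdisj : Disjoint (Ico 0 t ∩ T) (Ico 0 t \ T) := by
    rw [Set.disjoint_left]; rintro x ⟨_, hx2⟩ ⟨_, hx4⟩; exact hx4 hx2
  have hmeas2 : MeasurableSet (Ico (0:ℝ) t \ T) :=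
    measurableSet_Ico.diff hT.measurableSet
  have hsplit : Ico (0:ℝ) t ∩ T ∪ Ico (0:ℝ) t \ T = Ico (0:ℝ) t := Set.inter_union_diff _ _
  have key : ∀ f : ℝ → ℝ, IntegrableOn f (Ico 0 t) volume →
      ∫ s in Ico (0:ℝ) t, f s
        = (∫ s in Ico (0:ℝ) t ∩ T, f s) + ∫ s in Ico (0:ℝ) t \ T, f s := by
    intro f hf
    rw [← MeasureTheory.setIntegral_union hdisj hmeas2 (hf.mono_set Set.inter_subset_left)
      (hf.mono_set Set.diff_subset), hsplit]
  rw [key F hFi', key g hgi']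
  congr 1
  · exact setIntegral_congr_ae (measurableSet_Ico.inter hT.measurableSet)
      (ae_jDensity_rhoBar_eq hT hTsub h0T h1T g Set.inter_subset_right)
  · -- gap part
    rw [gap_decomp hT hTsub h0T h1T htT, Set.biUnion_eq_iUnion]
    haveI := (countable_gapSet hT hTsub h0T h1T t).to_subtype
    have hdisj' : Pairwise (Function.onFun Disjoint
        fun a : ↥(gapSet T t) => Ioo (a:ℝ) (sigmaBar T (a:ℝ))) := by
      intro i j hij
      exact gaps_disjoint hTsub i.2.1 j.2.1 (fun h => hij (Subtype.coe_injective h))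
    have hmeasI : ∀ a : ↥(gapSet T t), MeasurableSet (Ioo (a:ℝ) (sigmaBar T (a:ℝ))) :=
      fun a => measurableSet_Ioo
    have hsub2 : (⋃ a : ↥(gapSet T t), Ioo (a:ℝ) (sigmaBar T (a:ℝ))) ⊆ Icc 0 1 := by
      rintro x hx
      simp only [Set.mem_iUnion] at hx
      obtain ⟨a, hx⟩ := hx
      obtain ⟨haT, halt, hat⟩ := a.2
      exact ⟨le_trans (hTsub haT).1 hx.1.le, le_trans hx.2.le (le_trans hat htI.2)⟩
    rw [MeasureTheory.integral_iUnion hmeasI hdisj' (hFi.mono_set hsub2),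
      MeasureTheory.integral_iUnion hmeasI hdisj' (hgi.integrableOn.mono_set hsub2)]
    refine tsum_congr fun a => ?_
    obtain ⟨haT, halt, _⟩ := a.2
    set b := sigmaBar T (a:ℝ) with hb
    have hconst : ∀ x ∈ Ioo (a:ℝ) b, F x = jDensity T g (a:ℝ) := fun x hx => by
      rw [hF]; simp only; rw [gap_rhoBar hT hTsub h0T haT hx]
    rw [setIntegral_congr_fun measurableSet_Ioo hconst, setIntegral_const]
    have hval : jDensity T g (a:ℝ) = (htilde g b - htilde g (a:ℝ)) / (b - (a:ℝ)) := by
      rw [jDensity, if_neg (ne_of_gt halt)]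
    rw [hval, Real.volume_real_Ioo_of_le (by linarith), smul_eq_mul,
      mul_div_cancel₀ _ (by linarith : b - (a:ℝ) ≠ 0),
      htilde_diff hgi (hTsub haT).1 halt.le, MeasureTheory.integral_Ico_eq_integral_Ioo]

end Aux5
section Aux6

variable {T : Set ℝ}

lemma memL2_comp (hT : IsClosed T) (hTsub : T ⊆ Icc 0 1)
    (h0T : (0:ℝ) ∈ T) (h1T : (1:ℝ) ∈ T) {g : ℝ → ℝ} (hgm : Measurable g)
    (hgi : Integrable g volume) (hg2 : MemLp g 2 (volume.restrict (Icc 0 1))) :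
    MemLp (fun s => jDensity T g (rhoBar T s)) 2 (volume.restrict (Icc 0 1)) := by
  have hFm : Measurable fun s => jDensity T g (rhoBar T s) :=
    (measurable_jDensity hTsub h1T hgm hgi).comp (measurable_rhoBar hTsub h0T)
  set F : ℝ → ℝ := fun s => jDensity T g (rhoBar T s) with hF
  rw [memLp_two_iff_integrable_sq hFm.aestronglyMeasurable]
  refine ⟨(hFm.pow_const 2).aestronglyMeasurable, ?_⟩
  have hg2i : Integrable (fun x => g x ^ 2) (volume.restrict (Icc 0 1)) :=
    (memLp_two_iff_integrable_sq hg2.aestronglyMeasurable).1 hg2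
  set φ : ℝ → ℝ≥0∞ := fun x => (‖g x‖₊ : ℝ≥0∞) ^ 2 with hφ
  have hφfin : ∫⁻ x in Icc (0:ℝ) 1, φ x < ⊤ := by
    have h' : ∫⁻ x in Icc (0:ℝ) 1, (‖g x ^ 2‖₊ : ℝ≥0∞) < ⊤ := hg2i.2
    refine lt_of_le_of_lt (le_of_eq (lintegral_congr fun x => ?_)) h'
    show (‖g x‖₊ : ℝ≥0∞) ^ 2 = (‖g x ^ 2‖₊ : ℝ≥0∞)
    rw [← ENNReal.coe_pow, ← nnnorm_pow]
  show (∫⁻ x in Icc (0:ℝ) 1, (‖F x ^ 2‖₊ : ℝ≥0∞)) < ⊤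
  have hpt : ∀ x, (‖F x ^ 2‖₊ : ℝ≥0∞) = (‖F x‖₊ : ℝ≥0∞) ^ 2 := fun x => by
    rw [← ENNReal.coe_pow, ← nnnorm_pow]
  rw [lintegral_congr hpt]
  have hsplit : Icc (0:ℝ) 1 = (Icc 0 1 ∩ T) ∪ (Icc 0 1 \ T) := (Set.inter_union_diff _ _).symm
  have hdisj : Disjoint (Icc (0:ℝ) 1 ∩ T) (Icc (0:ℝ) 1 \ T) := by
    rw [Set.disjoint_left]; rintro x ⟨_, hx2⟩ ⟨_, hx4⟩; exact hx4 hx2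
  have hmeas2 : MeasurableSet (Icc (0:ℝ) 1 \ T) := measurableSet_Icc.diff hT.measurableSet
  have hTpart : ∫⁻ x in Icc (0:ℝ) 1 ∩ T, (‖F x‖₊ : ℝ≥0∞) ^ 2
      ≤ ∫⁻ x in Icc (0:ℝ) 1, φ x := by
    have hae : ∀ᵐ x ∂(volume : Measure ℝ), x ∈ Icc (0:ℝ) 1 ∩ T →
        (‖F x‖₊ : ℝ≥0∞) ^ 2 = φ x := by
      filter_upwards [ae_jDensity_rhoBar_eq hT hTsub h0T h1T g
        (Set.inter_subset_right : Icc (0:ℝ) 1 ∩ T ⊆ T)] with x hx hxm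
      rw [hφ]; simp only; rw [show F x = g x from hx hxm]
    rw [setLIntegral_congr_fun_ae (measurableSet_Icc.inter hT.measurableSet) hae]
    exact lintegral_mono_set Set.inter_subset_left
  have hIccIco : Icc (0:ℝ) 1 \ T = Ico (0:ℝ) 1 \ T := by
    ext x
    constructor
    · rintro ⟨hx1, hx2⟩
      exact ⟨⟨hx1.1, lt_of_le_of_ne hx1.2 fun h => hx2 (h ▸ h1T)⟩, hx2⟩
    · rintro ⟨hx1, hx2⟩
      exact ⟨⟨hx1.1, hx1.2.le⟩, hx2⟩
  have hgap : ∫⁻ x in Icc (0:ℝ) 1 \ T, (‖F x‖₊ : ℝ≥0∞) ^ 2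
      ≤ ∫⁻ x in Icc (0:ℝ) 1, φ x := by
    rw [hIccIco, gap_decomp hT hTsub h0T h1T h1T, Set.biUnion_eq_iUnion]
    haveI := (countable_gapSet hT hTsub h0T h1T 1).to_subtype
    have hdisj' : Pairwise (Function.onFun Disjoint
        fun a : ↥(gapSet T 1) => Ioo (a:ℝ) (sigmaBar T (a:ℝ))) := by
      intro i j hij
      exact gaps_disjoint hTsub i.2.1 j.2.1 (fun h => hij (Subtype.coe_injective h))
    have hmeasI : ∀ a : ↥(gapSet T 1), MeasurableSet (Ioo (a:ℝ) (sigmaBar T (a:ℝ))) :=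
      fun a => measurableSet_Ioo
    rw [lintegral_iUnion hmeasI hdisj']
    have hbound : ∀ a : ↥(gapSet T 1),
        ∫⁻ x in Ioo (a:ℝ) (sigmaBar T (a:ℝ)), (‖F x‖₊ : ℝ≥0∞) ^ 2
          ≤ ∫⁻ x in Ioo (a:ℝ) (sigmaBar T (a:ℝ)), φ x := by
      intro a
      obtain ⟨haT, halt, _⟩ := a.2
      set b := sigmaBar T (a:ℝ) with hb
      have hba : (0:ℝ) < b - a := by linarith
      set cr : ℝ := (htilde g b - htilde g (a:ℝ)) / (b - (a:ℝ)) with hcr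
      have hconst : ∀ᵐ x ∂(volume : Measure ℝ), x ∈ Ioo (a:ℝ) b →
          (‖F x‖₊ : ℝ≥0∞) ^ 2 = ENNReal.ofReal (cr ^ 2) := by
        refine Filter.Eventually.of_forall fun x hx => ?_
        have : F x = cr := by
          rw [hF]; simp only
          rw [gap_rhoBar hT hTsub h0T haT hx, jDensity, if_neg (ne_of_gt halt)]
        rw [this, ennnorm_sq]
      rw [setLIntegral_congr_fun_ae measurableSet_Ioo hconst, setLIntegral_const,
        Real.volume_Ioo]
      -- real Cauchy-Schwarz on the gap
      have hIoo : Ioo (a:ℝ) b ⊆ Icc (0:ℝ) 1 := fun x hx =>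
        ⟨le_trans (hTsub haT).1 hx.1.le,
          le_trans hx.2.le (sigmaBar_le_one hTsub h1T (hTsub haT).2)⟩
      have hg2Ioo : IntegrableOn (fun x => g x ^ 2) (Ioo (a:ℝ) b) volume :=
        MeasureTheory.IntegrableOn.mono_set hg2i hIoo
      have hCS := sq_setIntegral_le measurableSet_Ioo
        (by rw [Real.volume_Ioo]; exact ENNReal.ofReal_ne_top) hgi.integrableOn hg2Ioo
      rw [Real.volume_Ioo, ENNReal.toReal_ofReal hba.le] at hCS
      have hint : ∫ x in Ioo (a:ℝ) b, g x = htilde g b - htilde g (a:ℝ) := by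
        rw [htilde_diff hgi (hTsub haT).1 halt.le, MeasureTheory.integral_Ico_eq_integral_Ioo]
      have hcrsq : (b - (a:ℝ)) * cr ^ 2 ≤ ∫ x in Ioo (a:ℝ) b, g x ^ 2 := by
        rw [hcr, ← hint, div_pow]
        have h9 : (b - (a:ℝ)) * ((∫ x in Ioo (a:ℝ) b, g x) ^ 2 / (b - (a:ℝ)) ^ 2)
            = (∫ x in Ioo (a:ℝ) b, g x) ^ 2 / (b - (a:ℝ)) := by
          field_simp
        rw [h9, div_le_iff₀ hba]
        linarith [hCS]
      calc ENNReal.ofReal (cr ^ 2) * ENNReal.ofReal (b - (a:ℝ))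
          = ENNReal.ofReal ((b - (a:ℝ)) * cr ^ 2) := by
            rw [← ENNReal.ofReal_mul (sq_nonneg cr), mul_comm]
        _ ≤ ENNReal.ofReal (∫ x in Ioo (a:ℝ) b, g x ^ 2) := ENNReal.ofReal_le_ofReal hcrsq
        _ = ∫⁻ x in Ioo (a:ℝ) b, ENNReal.ofReal (g x ^ 2) :=
            ofReal_integral_eq_lintegral_ofReal hg2Ioo
              (Filter.Eventually.of_forall fun x => sq_nonneg _)
        _ = ∫⁻ x in Ioo (a:ℝ) b, φ x := lintegral_congr fun x => (ennnorm_sq (g x)).symm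
    calc ∑' a : ↥(gapSet T 1), ∫⁻ x in Ioo (a:ℝ) (sigmaBar T (a:ℝ)), (‖F x‖₊ : ℝ≥0∞) ^ 2
        ≤ ∑' a : ↥(gapSet T 1), ∫⁻ x in Ioo (a:ℝ) (sigmaBar T (a:ℝ)), φ x :=
          ENNReal.tsum_le_tsum hbound
      _ = ∫⁻ x in ⋃ a : ↥(gapSet T 1), Ioo (a:ℝ) (sigmaBar T (a:ℝ)), φ x :=
          (lintegral_iUnion hmeasI hdisj' _).symm
      _ ≤ ∫⁻ x in Icc (0:ℝ) 1, φ x := by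
          refine lintegral_mono_set ?_
          rintro x hx
          simp only [Set.mem_iUnion] at hx
          obtain ⟨a, hx⟩ := hx
          obtain ⟨haT, halt, hat⟩ := a.2
          exact ⟨le_trans (hTsub haT).1 hx.1.le, le_trans hx.2.le hat⟩
  calc ∫⁻ x in Icc (0:ℝ) 1, (‖F x‖₊ : ℝ≥0∞) ^ 2
      = (∫⁻ x in Icc (0:ℝ) 1 ∩ T, (‖F x‖₊ : ℝ≥0∞) ^ 2)
        + ∫⁻ x in Icc (0:ℝ) 1 \ T, (‖F x‖₊ : ℝ≥0∞) ^ 2 := by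
        conv_lhs => rw [hsplit]
        rw [lintegral_union hmeas2 hdisj]
    _ ≤ (∫⁻ x in Icc (0:ℝ) 1, φ x) + ∫⁻ x in Icc (0:ℝ) 1, φ x := add_le_add hTpart hgap
    _ < ⊤ := ENNReal.add_lt_top.2 ⟨hφfin, hφfin⟩

end Aux6
theorem stmt_9 (T : Set ℝ) (hT : IsClosed T) (hTsub : T ⊆ Icc 0 1)
    (h0T : (0:ℝ) ∈ T) (h1T : (1:ℝ) ∈ T)
    (g : ℝ → ℝ) (hg : MemLp g 2 (volume.restrict (Icc 0 1))) :
    MemLp (jDensity T g) 2 (lamDelta T) ∧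
    ∀ t ∈ T, htilde g t = ∫ s in Ico (0:ℝ) t ∩ T, jDensity T g s ∂(lamDelta T) := by
  haveI : IsFiniteMeasure (volume.restrict (Icc (0:ℝ) 1)) :=
    ⟨by rw [Measure.restrict_apply_univ, Real.volume_Icc]; exact ENNReal.ofReal_lt_top⟩
  have hρm : Measurable (rhoBar T) := measurable_rhoBar hTsub h0T
  -- the measurable modification of g
  set g₀ : ℝ → ℝ := (Icc (0:ℝ) 1).indicator (hg.1.mk g) with hg₀
  have hg₀m : Measurable g₀ :=
    hg.1.stronglyMeasurable_mk.measurable.indicator measurableSet_Icc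
  have hae0 : g =ᵐ[volume.restrict (Icc (0:ℝ) 1)] g₀ := by
    filter_upwards [hg.1.ae_eq_mk, ae_restrict_mem measurableSet_Icc] with x hx hxm
    rw [hg₀, Set.indicator_of_mem hxm, hx]
  have hg₀2 : MemLp g₀ 2 (volume.restrict (Icc (0:ℝ) 1)) := hg.ae_eq hae0
  have hg₀i : Integrable g₀ volume := by
    rw [hg₀, integrable_indicator_iff measurableSet_Icc]
    exact ((hg.ae_eq hg.1.ae_eq_mk).integrable one_le_two : Integrable (hg.1.mk g) _)
  have hFm : Measurable fun s => jDensity T g₀ (rhoBar T s) :=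
    (measurable_jDensity hTsub h1T hg₀m hg₀i).comp hρm
  have hFL2 : MemLp (fun s => jDensity T g₀ (rhoBar T s)) 2 (volume.restrict (Icc 0 1)) :=
    memL2_comp hT hTsub h0T h1T hg₀m hg₀i hg₀2
  have hFi : IntegrableOn (fun s => jDensity T g₀ (rhoBar T s)) (Icc 0 1) volume :=
    hFL2.integrable one_le_two
  -- htilde agreement on [0,1]
  have hhtilde : ∀ t ∈ Icc (0:ℝ) 1, htilde g t = htilde g₀ t := by
    intro t ht
    refine integral_congr_ae (ae_restrict_of_ae_restrict_of_subset ?_ hae0)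
    exact fun x hx => ⟨hx.1, le_trans hx.2.le ht.2⟩
  -- jDensity agreement lamDelta-a.e.
  have haeΔ : jDensity T g =ᵐ[lamDelta T] jDensity T g₀ := by
    rw [Filter.eventuallyEq_iff_exists_mem]
    set N := toMeasurable (volume.restrict (Icc (0:ℝ) 1)) {x | g x ≠ g₀ x} with hN
    have hNmeas : MeasurableSet N := measurableSet_toMeasurable _ _
    have hNnull : volume.restrict (Icc (0:ℝ) 1) N = 0 := by
      rw [hN, measure_toMeasurable]
      exact hae0
    set B : Set ℝ := (Icc (0:ℝ) 1)ᶜ ∪ ({t | sigmaBar T t = t} ∩ N) with hB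
    have hBmeas : MeasurableSet B :=
      measurableSet_Icc.compl.union
        ((measurableSet_eq_fun (measurable_sigmaBar hTsub h1T) measurable_id).inter hNmeas)
    refine ⟨Bᶜ, ?_, fun x hx => ?_⟩
    · -- Bᶜ ∈ (lamDelta T).ae
      rw [mem_ae_iff, compl_compl]
      rw [lamDelta, Measure.map_apply hρm hBmeas, Measure.restrict_apply (hρm hBmeas)]
      refine measure_mono_null (t := N ∩ Icc 0 1) ?_ ?_
      · rintro x ⟨hx1, hx2⟩
        have hρIcc : rhoBar T x ∈ Icc (0:ℝ) 1 :=
          ⟨rhoBar_nonneg hTsub h0T x, rhoBar_le_one hTsub h0T x⟩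
        have hx1' : rhoBar T x ∈ {t | sigmaBar T t = t} ∩ N := by
          rcases hx1 with h | h
          · exact absurd hρIcc fun hc => h hc
          · exact h
        have hρeq : rhoBar T x = x :=
          rhoBar_eq_self_of_sigmaBar hT hTsub h0T h1T hx2 hx1'.1
        exact ⟨hρeq ▸ hx1'.2, hx2⟩
      · have := hNnull
        rwa [Measure.restrict_apply hNmeas] at this
    · -- pointwise implication on Bᶜ
      simp only [hB, Set.mem_compl_iff, Set.mem_union, not_or, Set.mem_inter_iff,
        not_and, Set.mem_compl_iff, not_not] at hx
      obtain ⟨hxIcc, hx2⟩ := hx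
      by_cases hσ : sigmaBar T x = x
      · have hxN : x ∉ N := fun h => (hx2 hσ) h
        have hgx : g x = g₀ x := by
          by_contra hc
          exact hxN (subset_toMeasurable _ _ hc)
        rw [jDensity, jDensity, if_pos hσ, if_pos hσ, hgx]
      · have hσIcc : sigmaBar T x ∈ Icc (0:ℝ) 1 :=
          ⟨le_trans hxIcc.1 (le_sigmaBar h1T hxIcc.2), sigmaBar_le_one hTsub h1T hxIcc.2⟩
        rw [jDensity, jDensity, if_neg hσ, if_neg hσ,
          hhtilde _ hσIcc, hhtilde _ hxIcc]
  constructor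
  · -- part 1
    have h₀ : MemLp (jDensity T g₀) 2 (lamDelta T) := by
      refine ⟨(measurable_jDensity hTsub h1T hg₀m hg₀i).aestronglyMeasurable, ?_⟩
      rw [lamDelta, eLpNorm_map_measure
        (measurable_jDensity hTsub h1T hg₀m hg₀i).aestronglyMeasurable hρm.aemeasurable]
      exact hFL2.2
    exact h₀.ae_eq haeΔ.symm
  · -- part 2
    intro t htT
    have htI : t ∈ Icc (0:ℝ) 1 := hTsub htT
    have hmeasIT : MeasurableSet (Ico (0:ℝ) t ∩ T) :=
      measurableSet_Ico.inter hT.measurableSet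
    have step1 : ∫ s in Ico (0:ℝ) t ∩ T, jDensity T g s ∂(lamDelta T)
        = ∫ s in Ico (0:ℝ) t ∩ T, jDensity T g₀ s ∂(lamDelta T) :=
      integral_congr_ae (ae_restrict_of_ae haeΔ)
    have step2 : ∫ s in Ico (0:ℝ) t ∩ T, jDensity T g₀ s ∂(lamDelta T)
        = ∫ x in rhoBar T ⁻¹' (Ico (0:ℝ) t ∩ T), jDensity T g₀ (rhoBar T x)
            ∂(volume.restrict (Icc 0 1)) := by
      rw [lamDelta, setIntegral_map hmeasIT
        ((measurable_jDensity hTsub h1T hg₀m hg₀i).aestronglyMeasurable) hρm.aemeasurable]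
    have hsetae : rhoBar T ⁻¹' (Ico (0:ℝ) t ∩ T) =ᵐ[volume.restrict (Icc (0:ℝ) 1)]
        Ico (0:ℝ) t := by
      have hnull : (volume.restrict (Icc (0:ℝ) 1)) ({t} ∪ (Icc (0:ℝ) 1)ᶜ) = 0 := by
        refine measure_union_null ?_ ?_
        · rw [Measure.restrict_apply (measurableSet_singleton t)]
          exact measure_mono_null Set.inter_subset_left Real.volume_singleton
        · rw [Measure.restrict_apply measurableSet_Icc.compl, Set.compl_inter_self]
          exact measure_empty
      rw [ae_eq_set]
      constructor
      · refine measure_mono_null (t := {t} ∪ (Icc (0:ℝ) 1)ᶜ) ?_ hnull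
        rintro x ⟨hx1, hx2⟩
        by_cases hxIcc : x ∈ Icc (0:ℝ) 1
        · left
          obtain ⟨⟨hρ0, hρt⟩, hρT⟩ := hx1
          have hxt : t ≤ x := by
            by_contra hc
            push_neg at hc
            exact hx2 ⟨hxIcc.1, hc⟩
          rcases eq_or_lt_of_le hxt with h | h
          · exact h ▸ rfl
          · exfalso
            have hx0 : 0 < x := lt_of_le_of_lt (hTsub htT).1 h
            have : t ≤ rhoBar T x := by
              rw [rhoBar_of_pos h0T hx0]
              exact le_csSup (bddAbove_rho x) ⟨htT, h⟩
            exact absurd hρt (not_lt.2 this)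
        · exact Or.inr hxIcc
      · refine measure_mono_null (t := (∅ : Set ℝ)) ?_ measure_empty
        rintro x ⟨hx1, hx2⟩
        refine absurd (show rhoBar T x ∈ Ico (0:ℝ) t ∩ T from ?_) hx2
        exact ⟨⟨rhoBar_nonneg hTsub h0T x,
          lt_of_le_of_lt (rhoBar_le_self h0T hx1.1) hx1.2⟩, rhoBar_mem hT h0T hx1.1⟩
    have step3 : ∫ x in rhoBar T ⁻¹' (Ico (0:ℝ) t ∩ T), jDensity T g₀ (rhoBar T x)
            ∂(volume.restrict (Icc 0 1))
        = ∫ x in Ico (0:ℝ) t, jDensity T g₀ (rhoBar T x) ∂(volume.restrict (Icc 0 1)) :=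
      setIntegral_congr_set hsetae
    have step4 : ∫ x in Ico (0:ℝ) t, jDensity T g₀ (rhoBar T x) ∂(volume.restrict (Icc 0 1))
        = ∫ x in Ico (0:ℝ) t, jDensity T g₀ (rhoBar T x) ∂(volume : Measure ℝ) := by
      rw [Measure.restrict_restrict measurableSet_Ico, Set.inter_eq_left.2
        (fun x hx => Set.mem_Icc.2 ⟨(Set.mem_Ico.1 hx).1, le_trans (Set.mem_Ico.1 hx).2.le htI.2⟩)]
    rw [step1, step2, step3, step4, core_integral_eq hT hTsub h0T h1T hg₀i hFi htT,
      hhtilde t htI]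
    rfl
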